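/- Let (Y₁,d₁) and (Y₂,d₂) be δ-hyperbolic geodesic metric spaces. Let μ₁ be a geodesic segment in Y₁ joining points a and b, let p ∈ Y₁, and let q ∈ μ₁ be a point with d₁(p,q) ≤ d₁(p,x) for all x ∈ μ₁. Let φ : Y₁ → Y₂ be a (K,ε)-quasi-isometric embedding, let μ₂ be a geodesic segment in Y₂ joining φ(a) and φ(b), and let r ∈ μ₂ be a point with d₂(φ(p),r) ≤ d₂(φ(p),x) for all x ∈ μ₂. Then d₂(r,φ(q)) ≤ C₄ for a constant C₄ depending only on K, ε and δ. -/

import Mathlib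

noncomputable section

open Metric Set

/-- A geodesic segment from `a` to `b` in a metric space:
an isometric parametrization of the interval `[0, dist a b]`. -/
def IsGeodesicSegment {X : Type*} [MetricSpace X] (f : ℝ → X) (a b : X) : Prop :=
  f 0 = a ∧ f (dist a b) = b ∧
    ∀ s ∈ Set.Icc (0 : ℝ) (dist a b), ∀ t ∈ Set.Icc (0 : ℝ) (dist a b),
      dist (f s) (f t) = |s - t|

/-- The image of a geodesic segment from `a` to `b`. -/
def geodImage {X : Type*} [MetricSpace X] (f : ℝ → X) (a b : X) : Set X :=
  f '' Set.Icc (0 : ℝ) (dist a b)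

/-- A geodesic metric space: any two points are joined by a geodesic segment. -/
def IsGeodesicSpace (X : Type*) [MetricSpace X] : Prop :=
  ∀ a b : X, ∃ f : ℝ → X, IsGeodesicSegment f a b

/-- `δ`-hyperbolicity: every geodesic triangle is `δ`-thin, i.e. each side is contained in
the `δ`-neighborhood of the union of the other two sides. -/
def IsDeltaHyperbolic (X : Type*) [MetricSpace X] (δ : ℝ) : Prop :=
  ∀ (a b c : X) (f g h : ℝ → X),
    IsGeodesicSegment f a b → IsGeodesicSegment g b c → IsGeodesicSegment h a c →
    ∀ x ∈ geodImage h a c, ∃ y ∈ geodImage f a b ∪ geodImage g b c, dist x y ≤ δ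

/-- A subset `Z` is `C`-quasiconvex: every geodesic segment joining two points of `Z`
lies in the `C`-neighborhood of `Z`. -/
def IsQuasiconvexSet {X : Type*} [MetricSpace X] (C : ℝ) (Z : Set X) : Prop :=
  ∀ a ∈ Z, ∀ b ∈ Z, ∀ f : ℝ → X, IsGeodesicSegment f a b →
    ∀ x ∈ geodImage f a b, ∃ z ∈ Z, dist x z ≤ C

section Aux

variable {Z : Type*} [MetricSpace Z]

lemma IsGeodesicSegment.continuousOn {f : ℝ → Z} {a b : Z} (hf : IsGeodesicSegment f a b) :
    ContinuousOn f (Icc 0 (dist a b)) := by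
  have : LipschitzOnWith 1 f (Icc 0 (dist a b)) := by
    rw [lipschitzOnWith_iff_dist_le_mul]
    intro s hs t ht
    rw [hf.2.2 s hs t ht, Real.dist_eq]
    simp
  exact this.continuousOn

lemma geodImage_nonempty {f : ℝ → Z} {a b : Z} (hf : IsGeodesicSegment f a b) :
    (geodImage f a b).Nonempty :=
  ⟨a, ⟨0, ⟨le_refl _, dist_nonneg⟩, hf.1⟩⟩

lemma geodImage_compact {f : ℝ → Z} {a b : Z} (hf : IsGeodesicSegment f a b) :
    IsCompact (geodImage f a b) :=
  isCompact_Icc.image_of_continuousOn hf.continuousOn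

lemma mem_geodImage_left {f : ℝ → Z} {a b : Z} (hf : IsGeodesicSegment f a b) :
    a ∈ geodImage f a b := ⟨0, ⟨le_refl _, dist_nonneg⟩, hf.1⟩

lemma mem_geodImage_right {f : ℝ → Z} {a b : Z} (hf : IsGeodesicSegment f a b) :
    b ∈ geodImage f a b := ⟨dist a b, ⟨dist_nonneg, le_refl _⟩, hf.2.1⟩

/-- existence of a nearest point on a geodesic segment -/
lemma exists_proj {f : ℝ → Z} {a b : Z} (hf : IsGeodesicSegment f a b) (w : Z) :
    ∃ π ∈ geodImage f a b, dist w π = infDist w (geodImage f a b) ∧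
      ∀ z ∈ geodImage f a b, dist w π ≤ dist w z := by
  obtain ⟨π, hπ, hd⟩ := (geodImage_compact hf).exists_infDist_eq_dist (geodImage_nonempty hf) w
  exact ⟨π, hπ, hd.symm, fun z hz => hd ▸ infDist_le_dist_of_mem hz⟩

/-- subsegment of a geodesic (in either direction) -/
lemma exists_sub_geodesic {f : ℝ → Z} {a b : Z} (hf : IsGeodesicSegment f a b)
    {s₀ s₁ : ℝ} (h₀ : s₀ ∈ Icc 0 (dist a b)) (h₁ : s₁ ∈ Icc 0 (dist a b)) :
    ∃ g : ℝ → Z, IsGeodesicSegment g (f s₀) (f s₁) ∧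
      geodImage g (f s₀) (f s₁) ⊆ geodImage f a b := by
  have hdist : dist (f s₀) (f s₁) = |s₁ - s₀| := by
    rw [hf.2.2 s₀ h₀ s₁ h₁, abs_sub_comm]
  rcases le_total s₀ s₁ with hle | hle
  · refine ⟨fun t => f (s₀ + t), ⟨by simp, ?_, ?_⟩, ?_⟩
    · rw [hdist, abs_of_nonneg (by linarith)]; ring_nf
    · intro s hs t ht
      rw [hdist, abs_of_nonneg (by linarith)] at hs ht
      have hs' : s₀ + s ∈ Icc 0 (dist a b) := ⟨by linarith [hs.1, h₀.1], by linarith [hs.2, h₁.2]⟩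
      have ht' : s₀ + t ∈ Icc 0 (dist a b) := ⟨by linarith [ht.1, h₀.1], by linarith [ht.2, h₁.2]⟩
      rw [hf.2.2 _ hs' _ ht']
      congr 1; ring
    · rintro x ⟨t, ht, rfl⟩
      rw [hdist, abs_of_nonneg (by linarith)] at ht
      exact ⟨s₀ + t, ⟨by linarith [ht.1, h₀.1], by linarith [ht.2, h₁.2]⟩, rfl⟩
  · refine ⟨fun t => f (s₀ - t), ⟨by simp, ?_, ?_⟩, ?_⟩
    · rw [hdist, abs_of_nonpos (by linarith)]; ring_nf
    · intro s hs t ht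
      rw [hdist, abs_of_nonpos (by linarith)] at hs ht
      have hs' : s₀ - s ∈ Icc 0 (dist a b) := ⟨by linarith [hs.2, h₁.1], by linarith [hs.1, h₀.2]⟩
      have ht' : s₀ - t ∈ Icc 0 (dist a b) := ⟨by linarith [ht.2, h₁.1], by linarith [ht.1, h₀.2]⟩
      rw [hf.2.2 _ hs' _ ht']
      rw [abs_sub_comm]; congr 1; ring
    · rintro x ⟨t, ht, rfl⟩
      rw [hdist, abs_of_nonpos (by linarith)] at ht
      exact ⟨s₀ - t, ⟨by linarith [ht.2, h₁.1], by linarith [ht.1, h₀.2]⟩, rfl⟩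

end Aux

section LemB

variable {Z : Type*} [MetricSpace Z] {δ : ℝ}

/-- Lemma B': any geodesic from `w` to a point `z` of the segment passes within `3δ`
of the nearest-point projection `π` of `w`. -/
lemma passes_near_proj (hgeo : IsGeodesicSpace Z) (hhyp : IsDeltaHyperbolic Z δ) (hδ : 0 ≤ δ)
    {f : ℝ → Z} {a b : Z} (hf : IsGeodesicSegment f a b)
    {w π : Z} (hπ : π ∈ geodImage f a b)
    (hmin : ∀ z ∈ geodImage f a b, dist w π ≤ dist w z)
    {z : Z} (hz : z ∈ geodImage f a b)
    {h : ℝ → Z} (hh : IsGeodesicSegment h w z) :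
    ∃ m ∈ geodImage h w z, dist m π ≤ 3 * δ := by
  obtain ⟨sπ, hsπ, rfl⟩ := hπ
  obtain ⟨sz, hsz, rfl⟩ := hz
  obtain ⟨g, hg, hgsub⟩ := exists_sub_geodesic hf hsπ hsz
  obtain ⟨h₁, hh₁⟩ := hgeo w (f sπ)
  set F₁ := geodImage h₁ w (f sπ) with hF₁
  set F₂ := geodImage g (f sπ) (f sz) with hF₂
  have hthin := hhyp w (f sπ) (f sz) h₁ g h hh₁ hg hh
  set T := dist w (f sz) with hT
  have hT0 : 0 ≤ T := dist_nonneg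
  -- the two closed sets
  have hc1 : ContinuousOn (fun t => infDist (h t) F₁) (Icc 0 T) :=
    (continuous_infDist_pt F₁).comp_continuousOn hh.continuousOn
  have hc2 : ContinuousOn (fun t => infDist (h t) F₂) (Icc 0 T) :=
    (continuous_infDist_pt F₂).comp_continuousOn hh.continuousOn
  set S₁ := Icc (0:ℝ) T ∩ (fun t => infDist (h t) F₁) ⁻¹' Iic δ with hS₁
  set S₂ := Icc (0:ℝ) T ∩ (fun t => infDist (h t) F₂) ⁻¹' Iic δ with hS₂
  have hS₁c : IsClosed S₁ := hc1.preimage_isClosed_of_isClosed isClosed_Icc isClosed_Iic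
  have hS₂c : IsClosed S₂ := hc2.preimage_isClosed_of_isClosed isClosed_Icc isClosed_Iic
  have hcover : Icc (0:ℝ) T ⊆ S₁ ∪ S₂ := by
    intro t ht
    obtain ⟨y, hy, hyd⟩ := hthin (h t) ⟨t, ht, rfl⟩
    rcases hy with hy | hy
    · exact Or.inl ⟨ht, le_trans (infDist_le_dist_of_mem hy) hyd⟩
    · exact Or.inr ⟨ht, le_trans (infDist_le_dist_of_mem hy) hyd⟩
  have hne1 : (Icc (0:ℝ) T ∩ S₁).Nonempty := by
    refine ⟨0, ⟨le_refl _, hT0⟩, ⟨le_refl _, hT0⟩, ?_⟩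
    have : w ∈ F₁ := mem_geodImage_left hh₁
    simpa [infDist_zero_of_mem this, hh.1] using hδ
  have hne2 : (Icc (0:ℝ) T ∩ S₂).Nonempty := by
    refine ⟨T, ⟨hT0, le_refl _⟩, ⟨hT0, le_refl _⟩, ?_⟩
    have : f sz ∈ F₂ := mem_geodImage_right hg
    have e : h T = f sz := hh.2.1
    show infDist (h T) F₂ ≤ δ
    rw [e, infDist_zero_of_mem this]; exact hδ
  obtain ⟨t, ht, ht1, ht2⟩ :=
    (isPreconnected_closed_iff.1 isPreconnected_Icc) S₁ S₂ hS₁c hS₂c hcover hne1 hne2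
  -- nearest points in F₁, F₂ to m := h t
  set m := h t with hm
  obtain ⟨u, hu, hud⟩ := (geodImage_compact hh₁).exists_infDist_eq_dist (geodImage_nonempty hh₁) m
  obtain ⟨v, hv, hvd⟩ := (geodImage_compact hg).exists_infDist_eq_dist (geodImage_nonempty hg) m
  have hmu : dist m u ≤ δ := hud ▸ ht1.2
  have hmv : dist m v ≤ δ := hvd ▸ ht2.2
  -- arithmetic
  obtain ⟨su, hsu, rfl⟩ := hu
  have hwu : dist w (h₁ su) = su := by
    have := hh₁.2.2 0 ⟨le_refl _, dist_nonneg⟩ su hsu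
    rw [hh₁.1] at this
    rw [this, abs_of_nonpos (by linarith [hsu.1])]; ring
  have huπ : dist (h₁ su) (f sπ) = dist w (f sπ) - su := by
    have := hh₁.2.2 su hsu (dist w (f sπ)) ⟨dist_nonneg, le_refl _⟩
    rw [hh₁.2.1] at this
    rw [this, abs_of_nonpos (by linarith [hsu.2])]; ring
  have hwv : dist w (f sπ) ≤ dist w v := hmin v (hgsub hv)
  have h1 : dist w (f sπ) ≤ dist w m + δ := by
    calc dist w (f sπ) ≤ dist w v := hwv
    _ ≤ dist w m + dist m v := dist_triangle _ _ _
    _ ≤ dist w m + δ := by linarith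
  have hdc : dist (h₁ su) m = dist m (h₁ su) := dist_comm _ _
  have h2 : dist w m ≤ dist w (h₁ su) + δ := by
    calc dist w m ≤ dist w (h₁ su) + dist (h₁ su) m := dist_triangle _ _ _
    _ ≤ dist w (h₁ su) + δ := by linarith
  have h3 : dist (h₁ su) (f sπ) ≤ 2 * δ := by rw [huπ]; rw [hwu] at h2; linarith
  refine ⟨m, ⟨t, ht, rfl⟩, ?_⟩
  calc dist m (f sπ) ≤ dist m (h₁ su) + dist (h₁ su) (f sπ) := dist_triangle _ _ _
  _ ≤ 3 * δ := by linarith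

/-- Lemma B: `dist w π + dist π z ≤ dist w z + 6δ` for any `z` on the segment. -/
lemma proj_dist_add_le (hgeo : IsGeodesicSpace Z) (hhyp : IsDeltaHyperbolic Z δ) (hδ : 0 ≤ δ)
    {f : ℝ → Z} {a b : Z} (hf : IsGeodesicSegment f a b)
    {w π : Z} (hπ : π ∈ geodImage f a b)
    (hmin : ∀ z ∈ geodImage f a b, dist w π ≤ dist w z)
    {z : Z} (hz : z ∈ geodImage f a b) :
    dist w π + dist π z ≤ dist w z + 6 * δ := by
  obtain ⟨h, hh⟩ := hgeo w z
  obtain ⟨m, hm, hmπ⟩ := passes_near_proj hgeo hhyp hδ hf hπ hmin hz hh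
  obtain ⟨tm, htm, rfl⟩ := hm
  have hwm : dist w (h tm) = tm := by
    have := hh.2.2 0 ⟨le_refl _, dist_nonneg⟩ tm htm
    rw [hh.1] at this
    rw [this, abs_of_nonpos (by linarith [htm.1])]; ring
  have hmz : dist (h tm) z = dist w z - tm := by
    have := hh.2.2 tm htm (dist w z) ⟨dist_nonneg, le_refl _⟩
    rw [hh.2.1] at this
    rw [this, abs_of_nonpos (by linarith [htm.2])]; ring
  have h1 : dist w π ≤ tm + 3 * δ := by
    calc dist w π ≤ dist w (h tm) + dist (h tm) π := dist_triangle _ _ _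
    _ ≤ tm + 3 * δ := by rw [hwm]; linarith
  have h2 : dist π z ≤ (dist w z - tm) + 3 * δ := by
    calc dist π z ≤ dist π (h tm) + dist (h tm) z := dist_triangle _ _ _
    _ ≤ (dist w z - tm) + 3 * δ := by rw [hmz, dist_comm π (h tm)]; linarith
  linarith

end LemB

section LemE

variable {Z : Type*} [MetricSpace Z] {δ : ℝ}

lemma IsGeodesicSegment.dist_left {h : ℝ → Z} {w z : Z} (hh : IsGeodesicSegment h w z)
    {t : ℝ} (ht : t ∈ Icc 0 (dist w z)) : dist w (h t) = t := by
  have := hh.2.2 0 ⟨le_refl _, dist_nonneg⟩ t ht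
  rw [hh.1] at this
  rw [this, abs_of_nonpos (by linarith [ht.1])]; ring

lemma IsGeodesicSegment.dist_right {h : ℝ → Z} {w z : Z} (hh : IsGeodesicSegment h w z)
    {t : ℝ} (ht : t ∈ Icc 0 (dist w z)) : dist (h t) z = dist w z - t := by
  have := hh.2.2 t ht (dist w z) ⟨dist_nonneg, le_refl _⟩
  rw [hh.2.1] at this
  rw [this, abs_of_nonpos (by linarith [ht.2])]; ring

/-- Lemma E: contraction property of nearest-point projections. -/
lemma proj_contraction (hgeo : IsGeodesicSpace Z) (hhyp : IsDeltaHyperbolic Z δ) (hδ : 0 ≤ δ)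
    {f : ℝ → Z} {a b : Z} (hf : IsGeodesicSegment f a b)
    {w y πw πy : Z} (hπw : πw ∈ geodImage f a b)
    (hminw : ∀ z ∈ geodImage f a b, dist w πw ≤ dist w z)
    (hπy : πy ∈ geodImage f a b)
    (hminy : ∀ z ∈ geodImage f a b, dist y πy ≤ dist y z)
    (hR : 8 * δ < dist w πw) (hclose : 2 * dist w y ≤ dist w πw) :
    dist πw πy ≤ 8 * δ := by
  by_contra hD'
  push_neg at hD'
  set D := dist πw πy with hDdef
  obtain ⟨sw, hsw, hsweq⟩ := hπw
  obtain ⟨sy, hsy, hsyeq⟩ := hπy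
  obtain ⟨g₀, hg₀, hg₀sub⟩ := exists_sub_geodesic hf hsw hsy
  rw [hsweq, hsyeq] at hg₀ hg₀sub
  -- midpoint
  have hD0 : 0 < D := lt_of_le_of_lt (by linarith) hD'
  have hmem : D / 2 ∈ Icc 0 (dist πw πy) := ⟨by linarith, by linarith⟩
  set z := g₀ (D / 2) with hz
  have hzw : dist πw z = D / 2 := hg₀.dist_left hmem
  have hzy : dist z πy = D / 2 := by
    have := hg₀.dist_right hmem; rw [this]; ring
  have hzS : z ∈ geodImage f a b := hg₀sub ⟨D / 2, hmem, rfl⟩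
  -- the four geodesics
  obtain ⟨h₁, hh₁⟩ := hgeo πw w
  obtain ⟨h₂, hh₂⟩ := hgeo w πy
  obtain ⟨h₃, hh₃⟩ := hgeo w y
  obtain ⟨h₄, hh₄⟩ := hgeo y πy
  obtain ⟨y₁, hy₁, hy₁d⟩ := hhyp πw w πy h₁ h₂ g₀ hh₁ hh₂ hg₀ z ⟨D / 2, hmem, rfl⟩
  have hwz : dist w πw ≤ dist w z := hminw z hzS
  rcases hy₁ with hy₁ | hy₁
  · -- y₁ on [πw, w]
    obtain ⟨s, hs, rfl⟩ := hy₁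
    have e1 : dist πw (h₁ s) = s := hh₁.dist_left hs
    have e2 : dist (h₁ s) w = dist πw w - s := hh₁.dist_right hs
    -- dist z (h₁ s) ≥ dist (h₁ s) πw
    have e3 : dist w z ≤ dist w (h₁ s) + dist (h₁ s) z := dist_triangle _ _ _
    have e4 : dist w (h₁ s) = dist πw w - s := by rw [dist_comm]; exact e2
    have e5 : dist πw w = dist w πw := dist_comm _ _
    have e6 : dist z (h₁ s) = dist (h₁ s) z := dist_comm _ _
    -- so s ≤ dist (h₁ s) z ≤ δ, hence dist πw z ≤ 2δ, contradiction with D/2 > 4δ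
    have : dist πw z ≤ dist πw (h₁ s) + dist (h₁ s) z := dist_triangle _ _ _
    have hfin : dist πw z ≤ 2 * δ := by
      rw [e1] at this
      have hs' : s ≤ dist (h₁ s) z := by linarith
      linarith
    rw [hzw] at hfin
    linarith
  · -- y₁ on [w, πy]; apply thinness of triangle (w, y, πy) at y₁
    obtain ⟨y₂, hy₂, hy₂d⟩ := hhyp w y πy h₃ h₄ h₂ hh₃ hh₄ hh₂ y₁ hy₁
    have hzy₂ : dist z y₂ ≤ 2 * δ := by
      calc dist z y₂ ≤ dist z y₁ + dist y₁ y₂ := dist_triangle _ _ _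
      _ ≤ 2 * δ := by linarith
    rcases hy₂ with hy₂ | hy₂
    · -- y₂ on [w, y] : far from the segment
      obtain ⟨s, hs, rfl⟩ := hy₂
      have e1 : dist w (h₃ s) = s := hh₃.dist_left hs
      have e2 : dist w z ≤ dist w (h₃ s) + dist (h₃ s) z := dist_triangle _ _ _
      have e3 : s ≤ dist w y := by
        have := hs.2; linarith [this]
      have e6 : dist z (h₃ s) = dist (h₃ s) z := dist_comm _ _
      -- dist (h₃ s) z ≥ dist w πw - dist w y ≥ (dist w πw)/2 > 4δ ≥ 2δ
      linarith
    · -- y₂ on [y, πy]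
      obtain ⟨s, hs, rfl⟩ := hy₂
      have e1 : dist y (h₄ s) = s := hh₄.dist_left hs
      have e2 : dist (h₄ s) πy = dist y πy - s := hh₄.dist_right hs
      have e3 : dist y πy ≤ dist y z := hminy z hzS
      have e4 : dist y z ≤ dist y (h₄ s) + dist (h₄ s) z := dist_triangle _ _ _
      have e6 : dist z (h₄ s) = dist (h₄ s) z := dist_comm _ _
      -- dist (h₄ s) πy ≤ 2δ hence dist z πy ≤ 4δ < D/2
      have e7 : dist (h₄ s) πy ≤ 2 * δ := by linarith
      have : dist z πy ≤ dist z (h₄ s) + dist (h₄ s) πy := dist_triangle _ _ _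
      rw [hzy] at *
      linarith

end LemE

section Morse

/-- constants for the Morse lemma -/
def mTau (K ε δ : ℝ) : ℝ := K * (8 * δ + ε + 1)
def mS (K ε δ : ℝ) : ℝ := K * mTau K ε δ + ε
def mH (K ε δ : ℝ) : ℝ := 2 * mS K ε δ + 8 * δ + 1
def mD0 (K ε δ : ℝ) : ℝ := mH K ε δ + mS K ε δ * (2 * (mH K ε δ + mS K ε δ) + ε + 1)
def mD1 (K ε δ : ℝ) : ℝ := mD0 K ε δ + mS K ε δ
def mD2 (K ε δ : ℝ) : ℝ := 3 * mD0 K ε δ + mS K ε δ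

lemma mTau_pos {K ε δ : ℝ} (hK : 1 ≤ K) (hε : 0 ≤ ε) (hδ : 0 ≤ δ) : 0 < mTau K ε δ := by
  unfold mTau; nlinarith

lemma mS_nonneg {K ε δ : ℝ} (hK : 1 ≤ K) (hε : 0 ≤ ε) (hδ : 0 ≤ δ) : 0 ≤ mS K ε δ := by
  have h1 : (0:ℝ) ≤ K := by linarith
  have h2 : (0:ℝ) ≤ 8 * δ + ε + 1 := by linarith
  unfold mS mTau
  nlinarith [mul_nonneg h1 (mul_nonneg h1 h2)]

lemma mH_nonneg {K ε δ : ℝ} (hK : 1 ≤ K) (hε : 0 ≤ ε) (hδ : 0 ≤ δ) : 0 ≤ mH K ε δ := by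
  unfold mH; nlinarith [mS_nonneg hK hε hδ]

lemma mD0_nonneg {K ε δ : ℝ} (hK : 1 ≤ K) (hε : 0 ≤ ε) (hδ : 0 ≤ δ) : 0 ≤ mD0 K ε δ := by
  unfold mD0; nlinarith [mS_nonneg hK hε hδ, mH_nonneg hK hε hδ]

lemma mD1_nonneg {K ε δ : ℝ} (hK : 1 ≤ K) (hε : 0 ≤ ε) (hδ : 0 ≤ δ) : 0 ≤ mD1 K ε δ := by
  unfold mD1; nlinarith [mS_nonneg hK hε hδ, mD0_nonneg hK hε hδ]

lemma mD2_nonneg {K ε δ : ℝ} (hK : 1 ≤ K) (hε : 0 ≤ ε) (hδ : 0 ≤ δ) : 0 ≤ mD2 K ε δ := by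
  unfold mD2; nlinarith [mS_nonneg hK hε hδ, mD0_nonneg hK hε hδ]

variable {Z : Type*} [MetricSpace Z] {δ : ℝ}

set_option maxHeartbeats 2000000 in
/-- The Morse lemma: a (K,ε)-quasigeodesic with the same endpoints as a geodesic stays
within bounded Hausdorff distance of it. -/
lemma morse (hgeo : IsGeodesicSpace Z) (hhyp : IsDeltaHyperbolic Z δ) (hδ : 0 ≤ δ)
    {K ε : ℝ} (hK : 1 ≤ K) (hε : 0 ≤ ε) {T : ℝ} (hT : 0 ≤ T) {ψ : ℝ → Z}
    (hψ : ∀ s ∈ Icc (0:ℝ) T, ∀ t ∈ Icc (0:ℝ) T,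
      (1 / K) * |s - t| - ε ≤ dist (ψ s) (ψ t) ∧ dist (ψ s) (ψ t) ≤ K * |s - t| + ε)
    {f : ℝ → Z} (hf : IsGeodesicSegment f (ψ 0) (ψ T)) :
    (∀ t ∈ Icc (0:ℝ) T, ∃ w ∈ geodImage f (ψ 0) (ψ T), dist (ψ t) w ≤ mD1 K ε δ) ∧
    (∀ z ∈ geodImage f (ψ 0) (ψ T), ∃ t ∈ Icc (0:ℝ) T, dist z (ψ t) ≤ mD2 K ε δ) := by
  classical
  have hK0 : (0:ℝ) < K := by linarith
  set τ := mTau K ε δ with hτdef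
  set sC := mS K ε δ with hsdef
  set hC := mH K ε δ with hhdef
  set D₀ := mD0 K ε δ with hD₀def
  have hτ0 : 0 < τ := mTau_pos hK hε hδ
  have hsC : K * τ + ε = sC := rfl
  have hsC0 : 0 ≤ sC := mS_nonneg hK hε hδ
  have hhC0 : 0 ≤ hC := mH_nonneg hK hε hδ
  have hhCs : 2 * sC + 8 * δ + 1 = hC := rfl
  have hD₀h : hC ≤ D₀ := by
    rw [hD₀def]; unfold mD0; nlinarith
  set S := geodImage f (ψ 0) (ψ T) with hSdef
  set L := dist (ψ 0) (ψ T) with hLdef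
  set n := ⌈T / τ⌉₊ with hndef
  set t : ℕ → ℝ := fun i => min (i * τ) T with htdef
  set x : ℕ → Z := fun i => ψ (t i) with hxdef
  have ht_mem : ∀ i, t i ∈ Icc (0:ℝ) T := fun i =>
    ⟨le_min (by positivity) hT, min_le_right _ _⟩
  have ht_mono : ∀ i j : ℕ, i ≤ j → t i ≤ t j := by
    intro i j hij
    exact min_le_min (by
      have : (i:ℝ) ≤ j := Nat.cast_le.mpr hij
      nlinarith) (le_refl _)
  have ht_sub : ∀ i j : ℕ, i ≤ j → t j - t i ≤ ((j:ℝ) - i) * τ := by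
    intro i j hij
    have hij' : (i:ℝ) ≤ j := Nat.cast_le.mpr hij
    rcases le_or_gt ((i:ℝ) * τ) T with hiT | hiT
    · have hti : t i = i * τ := min_eq_left hiT
      have : t j ≤ j * τ := min_le_left _ _
      rw [hti]; linarith
    · have hti : t i = T := min_eq_right (le_of_lt hiT)
      have : t j ≤ T := min_le_right _ _
      rw [hti]
      nlinarith
  have hdx : ∀ i j : ℕ, i ≤ j → dist (x i) (x j) ≤ K * (t j - t i) + ε := by
    intro i j hij
    have h := (hψ (t i) (ht_mem i) (t j) (ht_mem j)).2
    rwa [abs_of_nonpos (by linarith [ht_mono i j hij]), neg_sub] at h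
  have hlow : ∀ i j : ℕ, i ≤ j → (1 / K) * (t j - t i) - ε ≤ dist (x i) (x j) := by
    intro i j hij
    have h := (hψ (t i) (ht_mem i) (t j) (ht_mem j)).1
    rwa [abs_of_nonpos (by linarith [ht_mono i j hij]), neg_sub] at h
  have ht0 : t 0 = 0 := by simp [htdef, hT]
  have htn : t n = T := by
    apply min_eq_right
    have h1 : T / τ ≤ n := Nat.le_ceil _
    calc T = (T / τ) * τ := by field_simp
    _ ≤ n * τ := by nlinarith
  have hx0 : x 0 ∈ S := by
    have : x 0 = ψ 0 := by rw [hxdef]; simp only; rw [ht0]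
    rw [this]; exact mem_geodImage_left hf
  have hxn : x n ∈ S := by
    have : x n = ψ T := by rw [hxdef]; simp only; rw [htn]
    rw [this]; exact mem_geodImage_right hf
  set R : ℕ → ℝ := fun i => infDist (x i) S with hRdef
  have hR0 : R 0 = 0 := infDist_zero_of_mem hx0
  have hRn : R n = 0 := infDist_zero_of_mem hxn
  have hproj := fun i => exists_proj hf (x i)
  set π : ℕ → Z := fun i => (hproj i).choose with hπdef
  have hπS : ∀ i, π i ∈ S := fun i => (hproj i).choose_spec.1
  have hπd : ∀ i, dist (x i) (π i) = R i := fun i => (hproj i).choose_spec.2.1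
  have hπmin : ∀ i, ∀ z ∈ S, dist (x i) (π i) ≤ dist (x i) z :=
    fun i => (hproj i).choose_spec.2.2
  have hRlip : ∀ i j : ℕ, R i ≤ R j + dist (x i) (x j) := by
    intro i j
    rw [hRdef]; simp only
    rw [dist_comm (x i) (x j)]
    calc infDist (x i) S ≤ infDist (x j) S + dist (x i) (x j) := infDist_le_infDist_add_dist
    _ = infDist (x j) S + dist (x j) (x i) := by rw [dist_comm]
  have hunclamped : ∀ j : ℕ, j + 1 ≤ n → t j = j * τ := by
    intro j hj
    apply min_eq_left
    have h1 : (j:ℝ) < T / τ := Nat.lt_ceil.mp hj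
    have h2 : (j:ℝ) * τ ≤ (T / τ) * τ := by nlinarith
    have h3 : (T / τ) * τ = T := div_mul_cancel₀ T (ne_of_gt hτ0)
    linarith
  -- the key bound on R
  have key : ∀ i, i ≤ n → R i ≤ D₀ := by
    intro i₀ hi₀n
    by_cases hcase : R i₀ ≤ hC
    · linarith
    push_neg at hcase
    have hP0 : R 0 ≤ hC := by rw [hR0]; exact hhC0
    set j₁ := Nat.findGreatest (fun j => R j ≤ hC) i₀ with hj₁def
    have hj₁le : j₁ ≤ i₀ := hj₁def ▸ Nat.findGreatest_le (P := fun j => R j ≤ hC) i₀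
    have hj₁P : R j₁ ≤ hC := by
      have h := Nat.findGreatest_spec (P := fun j => R j ≤ hC) (Nat.zero_le i₀) hP0
      rwa [← hj₁def] at h
    have hj₁gt : ∀ k, j₁ < k → k ≤ i₀ → hC < R k := by
      intro k h1 h2
      refine lt_of_not_ge ?_
      have := Nat.findGreatest_is_greatest (P := fun j => R j ≤ hC) (hj₁def ▸ h1) h2
      exact this
    have hj₁lt : j₁ < i₀ :=
      lt_of_le_of_ne hj₁le (fun h => by rw [h] at hj₁P; linarith)
    have hex : ∃ m, R (i₀ + m) ≤ hC := ⟨n - i₀, by rw [Nat.add_sub_cancel' hi₀n, hRn]; exact hhC0⟩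
    set dd := Nat.find hex with hdddef
    set j₂ := i₀ + dd with hj₂def
    have hj₂P : R j₂ ≤ hC := Nat.find_spec hex
    have hj₂min : ∀ k, k < dd → hC < R (i₀ + k) := fun k hk => lt_of_not_ge (Nat.find_min hex hk)
    have hdd0 : 0 < dd := by
      rcases Nat.eq_zero_or_pos dd with h | h
      · exfalso; rw [hj₂def, h, Nat.add_zero] at hj₂P; linarith
      · exact h
    have hj₂le : j₂ ≤ n := by
      have hddle : dd ≤ n - i₀ :=
        Nat.find_le (by rw [Nat.add_sub_cancel' hi₀n, hRn]; exact hhC0)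
      omega
    have hi₀j₂ : i₀ < j₂ := by omega
    have hwin : ∀ j, j₁ < j → j < j₂ → hC < R j := by
      intro j h1 h2
      rcases le_or_gt j i₀ with h | h
      · exact hj₁gt j h1 h
      · have : j = i₀ + (j - i₀) := by omega
        rw [this]; exact hj₂min (j - i₀) (by omega)
    set a₁ := j₁ + 1 with ha₁def
    set a₂ := j₂ - 1 with ha₂def
    have ha₁₂ : a₁ ≤ a₂ := by omega
    set m := a₂ - a₁ with hmdef
    have ha₂m : a₁ + m = a₂ := by omega
    have hn2 : 2 ≤ n := by omega
    have ht_a₁ : t a₁ = a₁ * τ := hunclamped a₁ (by omega)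
    have ht_a₂ : t a₂ = a₂ * τ := hunclamped a₂ (by omega)
    -- R at the window boundary
    have hRa₁ : R a₁ ≤ hC + sC := by
      have h1 := hRlip a₁ j₁
      have h2 := hdx j₁ a₁ (by omega)
      have h3 := ht_sub j₁ a₁ (by omega)
      have hc : ((a₁:ℝ) - j₁) = 1 := by push_cast [ha₁def]; ring
      rw [hc, one_mul] at h3
      rw [dist_comm] at h2
      nlinarith
    have hRa₂ : R a₂ ≤ hC + sC := by
      have h1 := hRlip a₂ j₂
      have h2 := hdx a₂ j₂ (by omega)
      have h3 := ht_sub a₂ j₂ (by omega)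
      have hc : ((j₂:ℝ) - a₂) = 1 := by
        have : j₂ = a₂ + 1 := by omega
        rw [this]; push_cast; ring
      rw [hc, one_mul] at h3
      nlinarith
    -- chain of projections
    have hstep : ∀ j, j₁ < j → j + 1 < j₂ → dist (π j) (π (j + 1)) ≤ 8 * δ := by
      intro j hj1 hj2
      have hRj : hC < R j := hwin j hj1 (by omega)
      have hdj : dist (x j) (x (j+1)) ≤ sC := by
        have h2 := hdx j (j+1) (by omega)
        have h3 := ht_sub j (j+1) (by omega)
        have hc : (((j+1:ℕ)):ℝ) - j = 1 := by push_cast; ring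
        rw [hc, one_mul] at h3
        nlinarith
      apply proj_contraction hgeo hhyp hδ hf (hπS j) (hπmin j) (hπS (j+1)) (hπmin (j+1))
      · rw [hπd]; linarith
      · rw [hπd]; linarith
    have hchain : ∀ k, a₁ + k ≤ a₂ → dist (π a₁) (π (a₁ + k)) ≤ 8 * δ * k := by
      intro k
      induction k with
      | zero => intro _; simp
      | succ k ih =>
        intro hk
        have ih' := ih (by omega)
        have hs := hstep (a₁ + k) (by omega) (by omega)
        calc dist (π a₁) (π (a₁ + (k+1)))
            ≤ dist (π a₁) (π (a₁ + k)) + dist (π (a₁ + k)) (π (a₁ + k + 1)) := by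
              have : a₁ + (k + 1) = a₁ + k + 1 := by omega
              rw [this]; exact dist_triangle _ _ _
        _ ≤ 8 * δ * k + 8 * δ := by linarith
        _ = 8 * δ * ((k + 1 : ℕ) : ℝ) := by push_cast; ring
    -- the window length bound
    have hmbound : (m:ℝ) ≤ 2 * (hC + sC) + ε := by
      have hlow' := hlow a₁ a₂ ha₁₂
      have htt : t a₂ - t a₁ = (m:ℝ) * τ := by
        rw [ht_a₁, ht_a₂]
        have : (a₂:ℝ) = a₁ + m := by push_cast [← ha₂m]; ring
        rw [this]; ring
      have hupp : dist (x a₁) (x a₂) ≤ R a₁ + 8 * δ * m + R a₂ := by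
        have hch := hchain m (by omega)
        rw [ha₂m] at hch
        calc dist (x a₁) (x a₂) ≤ dist (x a₁) (π a₁) + dist (π a₁) (x a₂) := dist_triangle _ _ _
        _ ≤ dist (x a₁) (π a₁) + (dist (π a₁) (π a₂) + dist (π a₂) (x a₂)) := by
            linarith [dist_triangle (π a₁) (π a₂) (x a₂)]
        _ ≤ R a₁ + 8 * δ * m + R a₂ := by
            rw [hπd a₁]
            rw [dist_comm (π a₂) (x a₂), hπd a₂]
            linarith
      rw [htt] at hlow'
      have hττ : (1 / K) * ((m:ℝ) * τ) = (m:ℝ) * (8 * δ + ε + 1) := by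
        rw [hτdef]; unfold mTau; field_simp
      rw [hττ] at hlow'
      have hm0 : (0:ℝ) ≤ (m:ℝ) := Nat.cast_nonneg _
      nlinarith
    -- conclude
    have h1 := hRlip i₀ j₁
    have h2 := hdx j₁ i₀ (by omega)
    have h3 := ht_sub j₁ i₀ (by omega)
    have hi₀m : ((i₀:ℝ) - j₁) ≤ (m:ℝ) + 1 := by
      have : i₀ - j₁ ≤ m + 1 := by omega
      push_cast [← Nat.cast_le (α := ℝ)] at this ⊢
      have h' : ((i₀ - j₁ : ℕ):ℝ) ≤ ((m + 1 : ℕ):ℝ) := Nat.cast_le.mpr (by omega)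
      push_cast at h'
      have hji : (j₁:ℝ) ≤ i₀ := Nat.cast_le.mpr (by omega)
      have : ((i₀ - j₁ : ℕ):ℝ) = (i₀:ℝ) - j₁ := by
        push_cast [Nat.cast_sub (le_of_lt hj₁lt)]; ring
      linarith [this ▸ h']
    rw [dist_comm] at h2
    have hKτ : K * (t i₀ - t j₁) + ε ≤ ((m:ℝ) + 1) * sC := by
      have hKt : K * (t i₀ - t j₁) ≤ K * (((m:ℝ) + 1) * τ) := by
        apply mul_le_mul_of_nonneg_left _ (le_of_lt hK0)
        calc t i₀ - t j₁ ≤ ((i₀:ℝ) - j₁) * τ := h3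
        _ ≤ ((m:ℝ) + 1) * τ := by nlinarith
      have hm1 : (1:ℝ) ≤ (m:ℝ) + 1 := by linarith [Nat.cast_nonneg (α := ℝ) m]
      calc K * (t i₀ - t j₁) + ε ≤ K * (((m:ℝ) + 1) * τ) + ε := by linarith
      _ = ((m:ℝ) + 1) * (K * τ) + ε := by ring
      _ ≤ ((m:ℝ) + 1) * (K * τ) + ((m:ℝ) + 1) * ε := by nlinarith
      _ = ((m:ℝ) + 1) * sC := by rw [← hsC]; ring
    have hD₀' : hC + (2 * (hC + sC) + ε + 1) * sC = D₀ := by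
      rw [hD₀def, hhdef, hsdef]; unfold mD0; ring
    have hfin : R i₀ ≤ hC + ((m:ℝ) + 1) * sC := by linarith
    calc R i₀ ≤ hC + ((m:ℝ) + 1) * sC := hfin
    _ ≤ hC + (2 * (hC + sC) + ε + 1) * sC := by nlinarith
    _ = D₀ := hD₀'
  -- direction 1
  constructor
  · intro t' ht'
    rcases le_or_gt n ⌊t' / τ⌋₊ with hi | hi
    · -- t' = T
      have hdiv : (0:ℝ) ≤ t' / τ := div_nonneg ht'.1 (le_of_lt hτ0)
      have h1 : (n:ℝ) ≤ t' / τ := le_trans (Nat.cast_le.mpr hi) (Nat.floor_le hdiv)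
      have h2 : T ≤ t' := by
        have hnτ : (n:ℝ) * τ ≤ t' := by
          have h4 := mul_le_mul_of_nonneg_right h1 (le_of_lt hτ0)
          rwa [div_mul_cancel₀ t' (ne_of_gt hτ0)] at h4
        have hTn : T ≤ (n:ℝ) * τ := by
          have h3 : T / τ ≤ n := Nat.le_ceil _
          calc T = (T / τ) * τ := by field_simp
          _ ≤ n * τ := by nlinarith
        linarith
      have ht'T : t' = T := le_antisymm ht'.2 h2
      refine ⟨ψ T, mem_geodImage_right hf, ?_⟩
      rw [ht'T]
      simp [mD1_nonneg hK hε hδ]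
    · set i := ⌊t' / τ⌋₊ with hidef
      have hin : i ≤ n := le_of_lt hi
      have hit : (i:ℝ) * τ ≤ t' := by
        have := Nat.floor_le (show (0:ℝ) ≤ t' / τ from div_nonneg ht'.1 (le_of_lt hτ0))
        calc (i:ℝ) * τ ≤ (t' / τ) * τ := by nlinarith
        _ = t' := by field_simp
      have hti : t i = (i:ℝ) * τ := min_eq_left (le_trans hit ht'.2)
      have htd : |t' - t i| ≤ τ := by
        rw [hti]
        have h1 : t' < ((i:ℝ) + 1) * τ := by
          have := Nat.lt_floor_add_one (t' / τ)
          calc t' = (t' / τ) * τ := by field_simp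
          _ < ((i:ℝ) + 1) * τ := by nlinarith [Nat.lt_floor_add_one (t' / τ)]
        rw [abs_of_nonneg (by linarith)]
        nlinarith
      have hdψ : dist (ψ t') (x i) ≤ sC := by
        have h := (hψ t' ht' (t i) (ht_mem i)).2
        calc dist (ψ t') (x i) ≤ K * |t' - t i| + ε := h
        _ ≤ K * τ + ε := by nlinarith
        _ = sC := hsC
      refine ⟨π i, hπS i, ?_⟩
      calc dist (ψ t') (π i) ≤ dist (ψ t') (x i) + dist (x i) (π i) := dist_triangle _ _ _
      _ ≤ sC + D₀ := by rw [hπd]; linarith [key i hin]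
      _ = mD1 K ε δ := by rw [hD₀def, hsdef]; unfold mD1; ring
  -- direction 2
  · intro z hz
    obtain ⟨u, hu, rfl⟩ := hz
    have hparam : ∀ i : ℕ, ∃ v, v ∈ Icc (0:ℝ) L ∧ f v = π i := by
      intro i
      obtain ⟨v, hv, he⟩ := hπS i
      exact ⟨v, hv, he⟩
    set uP : ℕ → ℝ := fun i => (hparam i).choose with huPdef
    have huPmem : ∀ i, uP i ∈ Icc (0:ℝ) L := fun i => (hparam i).choose_spec.1
    have huPval : ∀ i, f (uP i) = π i := fun i => (hparam i).choose_spec.2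
    have hfd : ∀ s ∈ Icc (0:ℝ) L, ∀ v ∈ Icc (0:ℝ) L, dist (f s) (f v) = |s - v| := hf.2.2
    have hu0 : uP 0 = 0 := by
      have hπ0 : π 0 = ψ 0 := by
        have h1 : dist (x 0) (π 0) = 0 := by rw [hπd, hR0]
        have h2 : x 0 = ψ 0 := by rw [hxdef]; simp only; rw [ht0]
        rw [h2] at h1
        exact (dist_eq_zero.mp h1).symm
      have := hfd (uP 0) (huPmem 0) 0 ⟨le_refl _, dist_nonneg⟩
      rw [huPval, hf.1, hπ0, dist_self] at this
      have := (abs_eq_zero.mp this.symm)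
      linarith
    have hun : uP n = L := by
      have hπn : π n = ψ T := by
        have h1 : dist (x n) (π n) = 0 := by rw [hπd, hRn]
        have h2 : x n = ψ T := by rw [hxdef]; simp only; rw [htn]
        rw [h2] at h1
        exact (dist_eq_zero.mp h1).symm
      have := hfd (uP n) (huPmem n) L ⟨dist_nonneg, le_refl _⟩
      rw [huPval, hf.2.1, hπn, dist_self] at this
      have h3 := (abs_eq_zero.mp this.symm)
      linarith [sub_eq_zero.mp h3]
    have hgap : ∀ i : ℕ, i + 1 ≤ n → |uP (i+1) - uP i| ≤ 2 * D₀ + sC := by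
      intro i hi
      have h1 : |uP (i+1) - uP i| = dist (π (i+1)) (π i) := by
        rw [← huPval (i+1), ← huPval i]
        exact (hfd _ (huPmem (i+1)) _ (huPmem i)).symm
      have hdxi : dist (x i) (x (i+1)) ≤ sC := by
        have h2 := hdx i (i+1) (by omega)
        have h3 := ht_sub i (i+1) (by omega)
        have hc : (((i+1:ℕ)):ℝ) - i = 1 := by push_cast; ring
        rw [hc, one_mul] at h3
        nlinarith
      rw [h1]
      calc dist (π (i+1)) (π i) ≤ dist (π (i+1)) (x (i+1)) + dist (x (i+1)) (π i) := dist_triangle _ _ _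
      _ ≤ dist (π (i+1)) (x (i+1)) + (dist (x (i+1)) (x i) + dist (x i) (π i)) := by
          linarith [dist_triangle (x (i+1)) (x i) (π i)]
      _ ≤ 2 * D₀ + sC := by
          rw [dist_comm (π (i+1)) (x (i+1)), hπd, hπd]
          rw [dist_comm (x (i+1)) (x i)]
          linarith [key i (by omega), key (i+1) hi]
    set i₁ := Nat.findGreatest (fun i => uP i ≤ u) n with hi₁def
    have hP0 : uP 0 ≤ u := by rw [hu0]; exact hu.1
    have hi₁n : i₁ ≤ n := hi₁def ▸ Nat.findGreatest_le (P := fun i => uP i ≤ u) n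
    have hi₁P : uP i₁ ≤ u := by
      have h := Nat.findGreatest_spec (P := fun i => uP i ≤ u) (Nat.zero_le n) hP0
      rwa [← hi₁def] at h
    have hgapu : |u - uP i₁| ≤ 2 * D₀ + sC := by
      rcases eq_or_lt_of_le hi₁n with heq | hlt
      · have huL : u = L := by
          have h' : uP n ≤ u := heq ▸ hi₁P
          rw [hun] at h'
          exact le_antisymm hu.2 h'
        have h0 : 0 ≤ 2 * D₀ + sC := by linarith [hD₀h, hhC0, hsC0]
        rw [heq, hun, huL]
        simpa using h0
      · have hnot : ¬ (uP (i₁ + 1) ≤ u) := by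
          have := Nat.findGreatest_is_greatest (P := fun i => uP i ≤ u) (n := n)
            (hi₁def ▸ (by omega : i₁ < i₁ + 1)) (by omega)
          exact this
        push_neg at hnot
        have h1 := hgap i₁ (by omega)
        rw [abs_of_nonneg (by linarith)]
        have h2 : uP (i₁+1) - uP i₁ ≤ |uP (i₁+1) - uP i₁| := le_abs_self _
        linarith
    refine ⟨t i₁, ht_mem i₁, ?_⟩
    calc dist (f u) (ψ (t i₁)) ≤ dist (f u) (f (uP i₁)) + dist (f (uP i₁)) (ψ (t i₁)) := dist_triangle _ _ _
    _ ≤ |u - uP i₁| + dist (π i₁) (x i₁) := by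
        rw [hfd u hu (uP i₁) (huPmem i₁), huPval]
    _ ≤ (2 * D₀ + sC) + D₀ := by
        rw [dist_comm (π i₁) (x i₁), hπd]
        linarith [key i₁ hi₁n]
    _ = mD2 K ε δ := by rw [hD₀def, hsdef]; unfold mD2; ring

end Morse

set_option maxHeartbeats 1000000 in
/-- quasi-isometric embeddings of hyperbolic spaces almost commute with
nearest-point projections onto geodesic segments. -/
theorem quasiisometry_almost_commutes_with_projection
    (δ K ε : ℝ) (hδ : 0 ≤ δ) (hK : 1 ≤ K) (hε : 0 ≤ ε) :
    ∃ C₄ : ℝ, 0 ≤ C₄ ∧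
      ∀ (Y₁ Y₂ : Type) [MetricSpace Y₁] [MetricSpace Y₂],
        IsGeodesicSpace Y₁ → IsDeltaHyperbolic Y₁ δ →
        IsGeodesicSpace Y₂ → IsDeltaHyperbolic Y₂ δ →
        ∀ (a b p : Y₁) (μ₁ : ℝ → Y₁), IsGeodesicSegment μ₁ a b →
        ∀ q ∈ geodImage μ₁ a b, (∀ x ∈ geodImage μ₁ a b, dist p q ≤ dist p x) →
        ∀ φ : Y₁ → Y₂,
          (∀ y₁ y₂ : Y₁, (1 / K) * dist y₁ y₂ - ε ≤ dist (φ y₁) (φ y₂) ∧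
            dist (φ y₁) (φ y₂) ≤ K * dist y₁ y₂ + ε) →
        ∀ μ₂ : ℝ → Y₂, IsGeodesicSegment μ₂ (φ a) (φ b) →
        ∀ r ∈ geodImage μ₂ (φ a) (φ b),
          (∀ x ∈ geodImage μ₂ (φ a) (φ b), dist (φ p) r ≤ dist (φ p) x) →
          dist r (φ q) ≤ C₄ := by
  have hK0 : (0:ℝ) < K := by linarith
  refine ⟨3 * mD1 K ε δ + mD2 K ε δ + 3 * K * δ + ε + 6 * δ, ?_, ?_⟩
  · have h1 := mD1_nonneg hK hε hδ
    have h2 := mD2_nonneg hK hε hδ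
    nlinarith
  intro Y₁ Y₂ _ _ hgeo₁ hhyp₁ hgeo₂ hhyp₂ a b p μ₁ hμ₁ q hq hqmin φ hφ μ₂ hμ₂ r hr hrmin
  -- Step 1: φ q almost minimizes the distance from φ p to the φ-image of μ₁
  have step1 : ∀ x ∈ geodImage μ₁ a b,
      dist (φ p) (φ q) ≤ dist (φ p) (φ x) + (mD1 K ε δ + 3 * K * δ + ε) := by
    intro x hx
    obtain ⟨h₁, hh₁⟩ := hgeo₁ p x
    obtain ⟨m, hm, hmq⟩ := passes_near_proj hgeo₁ hhyp₁ hδ hμ₁ hq hqmin hx hh₁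
    obtain ⟨tm, htm, rfl⟩ := hm
    set T₁ := dist p x with hT₁
    set ψ₁ : ℝ → Y₂ := fun u => φ (h₁ u) with hψ₁def
    have hqi : ∀ s ∈ Icc (0:ℝ) T₁, ∀ u ∈ Icc (0:ℝ) T₁,
        (1 / K) * |s - u| - ε ≤ dist (ψ₁ s) (ψ₁ u) ∧ dist (ψ₁ s) (ψ₁ u) ≤ K * |s - u| + ε := by
      intro s hs u hu
      have h := hφ (h₁ s) (h₁ u)
      rwa [hh₁.2.2 s hs u hu] at h
    obtain ⟨g₂, hg₂⟩ := hgeo₂ (φ p) (φ x)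
    have he0 : ψ₁ 0 = φ p := congrArg φ hh₁.1
    have heT : ψ₁ T₁ = φ x := congrArg φ hh₁.2.1
    have hg₂' : IsGeodesicSegment g₂ (ψ₁ 0) (ψ₁ T₁) := by rw [he0, heT]; exact hg₂
    obtain ⟨d1x, _⟩ := morse hgeo₂ hhyp₂ hδ hK hε dist_nonneg hqi hg₂'
    obtain ⟨w, hwS, hwd⟩ := d1x tm htm
    obtain ⟨v, hv, rfl⟩ := hwS
    have hpw : dist (ψ₁ 0) (g₂ v) = v := hg₂'.dist_left hv
    have hvle : v ≤ dist (ψ₁ 0) (ψ₁ T₁) := hv.2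
    have h877 : dist (ψ₁ 0) (ψ₁ T₁) = dist (φ p) (φ x) := by rw [he0, heT]
    have hφm : dist (φ (h₁ tm)) (φ q) ≤ K * (3 * δ) + ε := by
      have h := (hφ (h₁ tm) q).2
      nlinarith [dist_nonneg (x := h₁ tm) (y := q)]
    calc dist (φ p) (φ q) ≤ dist (φ p) (g₂ v) + dist (g₂ v) (φ (h₁ tm)) + dist (φ (h₁ tm)) (φ q) :=
          dist_triangle4 _ _ _ _
    _ ≤ dist (φ p) (φ x) + mD1 K ε δ + (K * (3 * δ) + ε) := by
        have e1 : dist (φ p) (g₂ v) = v := by rw [← he0]; exact hpw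
        have e2 : dist (g₂ v) (φ (h₁ tm)) ≤ mD1 K ε δ := by
          rw [dist_comm]; exact hwd
        have e3 : v ≤ dist (φ p) (φ x) := by rw [← h877]; exact hvle
        linarith
    _ = dist (φ p) (φ x) + (mD1 K ε δ + 3 * K * δ + ε) := by ring
  -- Step 2: the Morse lemma for φ ∘ μ₁ against μ₂
  set ψ₂ : ℝ → Y₂ := fun u => φ (μ₁ u) with hψ₂def
  set T₂ := dist a b with hT₂
  have hqi₂ : ∀ s ∈ Icc (0:ℝ) T₂, ∀ u ∈ Icc (0:ℝ) T₂,
      (1 / K) * |s - u| - ε ≤ dist (ψ₂ s) (ψ₂ u) ∧ dist (ψ₂ s) (ψ₂ u) ≤ K * |s - u| + ε := by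
    intro s hs u hu
    have h := hφ (μ₁ s) (μ₁ u)
    rwa [hμ₁.2.2 s hs u hu] at h
  have he0₂ : ψ₂ 0 = φ a := congrArg φ hμ₁.1
  have heT₂ : ψ₂ T₂ = φ b := congrArg φ hμ₁.2.1
  have hμ₂' : IsGeodesicSegment μ₂ (ψ₂ 0) (ψ₂ T₂) := by rw [he0₂, heT₂]; exact hμ₂
  obtain ⟨dir1, dir2⟩ := morse hgeo₂ hhyp₂ hδ hK hε dist_nonneg hqi₂ hμ₂'
  have him : geodImage μ₂ (ψ₂ 0) (ψ₂ T₂) = geodImage μ₂ (φ a) (φ b) := by rw [he0₂, heT₂]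
  rw [him] at dir1 dir2
  -- q'' on μ₂ near φ q
  obtain ⟨tq, htq, hq_eq⟩ := hq
  obtain ⟨q'', hq''S, hq''d⟩ := dir1 tq htq
  have hq''d' : dist (φ q) q'' ≤ mD1 K ε δ := by rw [← hq_eq]; exact hq''d
  -- point of φ ∘ μ₁ near r
  obtain ⟨ts, hts, hrd⟩ := dir2 r hr
  -- Lemma B in Y₂ at the projection r
  have hB := proj_dist_add_le hgeo₂ hhyp₂ hδ hμ₂ hr hrmin hq''S
  -- assemble
  have c1 : dist (φ p) q'' ≤ dist (φ p) (φ q) + mD1 K ε δ := by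
    calc dist (φ p) q'' ≤ dist (φ p) (φ q) + dist (φ q) q'' := dist_triangle _ _ _
    _ ≤ dist (φ p) (φ q) + mD1 K ε δ := by linarith
  have c2 : dist (φ p) (φ q) ≤ dist (φ p) (ψ₂ ts) + (mD1 K ε δ + 3 * K * δ + ε) :=
    step1 (μ₁ ts) ⟨ts, hts, rfl⟩
  have c3 : dist (φ p) (ψ₂ ts) ≤ dist (φ p) r + mD2 K ε δ := by
    calc dist (φ p) (ψ₂ ts) ≤ dist (φ p) r + dist r (ψ₂ ts) := dist_triangle _ _ _
    _ ≤ dist (φ p) r + mD2 K ε δ := by linarith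
  have c4 : dist r q'' ≤ mD1 K ε δ + (mD1 K ε δ + 3 * K * δ + ε) + mD2 K ε δ + 6 * δ := by
    linarith
  calc dist r (φ q) ≤ dist r q'' + dist q'' (φ q) := dist_triangle _ _ _
  _ ≤ 3 * mD1 K ε δ + mD2 K ε δ + 3 * K * δ + ε + 6 * δ := by
      rw [dist_comm q'' (φ q)]
      linarith
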